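/- For every positive integer m, the hafnian of the integer matrix T_{2,1} of order 2m (zero diagonal, entries 2 on the subdiagonal and superdiagonal, and entries 1 elsewhere off the diagonal) equals Σ_{k=0}^{m} (m+k)!/(k!·(m−k)!·2^k); in particular, for m = 1, 2, 3, 4, 5, 6 these values are 2, 7, 37, 266, 2431, 27007. -/

import Mathlib

/-- The hafnian of a matrix over a linearly ordered finite index type:
the sum over all fixed-point-free involutions `σ` of the product of the
entries `A i (σ i)`, taken over one representative `i < σ i` of each orbit. -/
def hafnian {ι : Type*} [Fintype ι] [LinearOrder ι] {R : Type*} [CommSemiring R]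
    (A : Matrix ι ι R) : R :=
  ∑ σ ∈ Finset.univ.filter
      (fun σ : Equiv.Perm ι => σ * σ = 1 ∧ ∀ i, σ i ≠ i),
    ∏ i ∈ Finset.univ.filter (fun i => i < σ i), A i (σ i)

/-- The integer Toeplitz matrix `T_{2,1}` of order `2m`: zero diagonal, entries `2` on
the sub- and superdiagonal, and entries `1` elsewhere. -/
def T21 (m : ℕ) : Matrix (Fin (2 * m)) (Fin (2 * m)) ℤ :=
  fun i j =>
    if i = j then 0
    else if (i : ℕ) + 1 = (j : ℕ) ∨ (j : ℕ) + 1 = (i : ℕ) then 2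
    else 1

open Finset Equiv
open scoped Nat

lemma hafnian_fin_zero (A : Matrix (Fin 0) (Fin 0) ℤ) : hafnian A = 1 := by
  have h : (Finset.univ : Finset (Equiv.Perm (Fin 0))) = {1} := by
    apply Finset.eq_singleton_iff_unique_mem.2
    exact ⟨Finset.mem_univ _, fun x _ => Subsingleton.elim _ _⟩
  simp [hafnian, h, Finset.filter_singleton]

lemma haf_core {ι κ : Type*} [Fintype ι] [LinearOrder ι] [Fintype κ] [LinearOrder κ]
    (A : Matrix ι ι ℤ) (u v : ι) (huv : u < v)
    (f : κ → ι) (hf : StrictMono f)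
    (hr : ∀ x, (∃ i, f i = x) ↔ (x ≠ u ∧ x ≠ v)) :
    ∑ σ ∈ Finset.univ.filter
      (fun σ : Equiv.Perm ι => (σ * σ = 1 ∧ ∀ i, σ i ≠ i) ∧ σ u = v),
      ∏ i ∈ Finset.univ.filter (fun i => i < σ i), A i (σ i)
    = A u v * hafnian (A.submatrix f f) := by
  set p : ι → Prop := fun x => x ≠ u ∧ x ≠ v with hp
  have hpf : ∀ i, p (f i) := fun i => (hr (f i)).1 ⟨i, rfl⟩
  have hfi : Function.Injective f := hf.injective
  have hpu : ¬ p u := fun h => h.1 rfl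
  have hpv : ¬ p v := fun h => h.2 rfl
  let e : κ ≃ {x // p x} :=
    Equiv.ofBijective (fun i => ⟨f i, hpf i⟩)
      ⟨fun a b hab => hfi (congrArg Subtype.val hab),
       fun x => by
        obtain ⟨i, hi⟩ := (hr x.1).2 x.2
        exact ⟨i, Subtype.ext hi⟩⟩
  have he : ∀ i, (e i : ι) = f i := fun i => rfl
  have hesymm : ∀ i (h : p (f i)), e.symm ⟨f i, h⟩ = i := by
    intro i h
    apply e.injective
    exact Subtype.ext (by simp [he])
  let F : Equiv.Perm κ → Equiv.Perm ι :=
    fun τ => (Equiv.swap u v) * (τ.extendDomain e)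
  have hext_f : ∀ (τ : Equiv.Perm κ) (i : κ), τ.extendDomain e (f i) = f (τ i) := by
    intro τ i
    rw [Equiv.Perm.extendDomain_apply_subtype _ e (hpf i), hesymm i (hpf i)]
    exact he (τ i)
  have hext_u : ∀ (τ : Equiv.Perm κ), τ.extendDomain e u = u := fun τ =>
    Equiv.Perm.extendDomain_apply_not_subtype _ e hpu
  have hext_v : ∀ (τ : Equiv.Perm κ), τ.extendDomain e v = v := fun τ =>
    Equiv.Perm.extendDomain_apply_not_subtype _ e hpv
  have hswap_f : ∀ (i : κ), Equiv.swap u v (f i) = f i := fun i =>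
    Equiv.swap_apply_of_ne_of_ne (hpf i).1 (hpf i).2
  have hF_f : ∀ τ i, F τ (f i) = f (τ i) := by
    intro τ i
    show Equiv.swap u v (τ.extendDomain e (f i)) = f (τ i)
    rw [hext_f, hswap_f]
  have hF_u : ∀ τ, F τ u = v := by
    intro τ; show Equiv.swap u v (τ.extendDomain e u) = v
    rw [hext_u, Equiv.swap_apply_left]
  have hF_v : ∀ τ, F τ v = u := by
    intro τ; show Equiv.swap u v (τ.extendDomain e v) = u
    rw [hext_v, Equiv.swap_apply_right]
  -- cases helper
  have hcases : ∀ x : ι, x = u ∨ x = v ∨ ∃ i, f i = x := by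
    intro x
    by_cases h1 : x = u
    · exact Or.inl h1
    by_cases h2 : x = v
    · exact Or.inr (Or.inl h2)
    · exact Or.inr (Or.inr ((hr x).2 ⟨h1, h2⟩))
  have hFmem : ∀ τ : Equiv.Perm κ, (τ * τ = 1 ∧ ∀ i, τ i ≠ i) →
      ((F τ * F τ = 1 ∧ ∀ x, F τ x ≠ x) ∧ F τ u = v) := by
    intro τ ⟨hτ2, hτfp⟩
    have hsq : F τ * F τ = 1 := by
      apply Equiv.ext
      intro x
      rcases hcases x with rfl | rfl | ⟨i, rfl⟩
      · simp only [Equiv.Perm.mul_apply, Equiv.Perm.one_apply, hF_u, hF_v]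
      · simp only [Equiv.Perm.mul_apply, Equiv.Perm.one_apply, hF_v, hF_u]
      · simp only [Equiv.Perm.mul_apply, Equiv.Perm.one_apply, hF_f]
        have : τ (τ i) = i := by
          have := congrArg (fun (g : Equiv.Perm κ) => g i) hτ2
          simpa using this
        rw [this]
    refine ⟨⟨hsq, ?_⟩, hF_u τ⟩
    intro x
    rcases hcases x with rfl | rfl | ⟨i, rfl⟩
    · rw [hF_u]; exact huv.ne'
    · rw [hF_v]; exact huv.ne
    · rw [hF_f]; exact fun h => hτfp i (hfi h)
  -- the set of pairs of `F τ`
  have hprodset : ∀ τ : Equiv.Perm κ,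
      Finset.univ.filter (fun x => x < F τ x) =
        insert u ((Finset.univ.filter (fun i => i < τ i)).map ⟨f, hfi⟩) := by
    intro τ
    ext x
    simp only [Finset.mem_filter, Finset.mem_univ, true_and, Finset.mem_insert,
      Finset.mem_map, Function.Embedding.coeFn_mk]
    rcases hcases x with rfl | rfl | ⟨i, rfl⟩
    · constructor
      · intro _; exact Or.inl rfl
      · intro _; rw [hF_u]; exact huv
    · constructor
      · intro h; rw [hF_v] at h; exact absurd h (not_lt.2 huv.le)
      · rintro (h | ⟨i, _, hi⟩)
        · exact absurd h huv.ne'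
        · exact absurd rfl ((hr _).1 ⟨i, hi⟩).2
    · rw [hF_f]
      constructor
      · intro h
        exact Or.inr ⟨i, hf.lt_iff_lt.1 h, rfl⟩
      · rintro (h | ⟨j, hj, hji⟩)
        · exact absurd rfl ((hr u).1 ⟨i, h⟩).1
        · rw [← hfi hji]; exact hf hj
  have hunotmem : ∀ τ : Equiv.Perm κ,
      u ∉ (Finset.univ.filter (fun i => i < τ i)).map ⟨f, hfi⟩ := by
    intro τ h
    rw [Finset.mem_map] at h
    obtain ⟨i, _, hi⟩ := h
    exact hpu ((hr u).1 ⟨i, hi⟩)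
  rw [hafnian, Finset.mul_sum]
  refine (Finset.sum_bij (fun τ _ => F τ) ?_ ?_ ?_ ?_).symm
  · intro τ hτ
    simp only [Finset.mem_filter, Finset.mem_univ, true_and] at hτ ⊢
    exact hFmem τ hτ
  · intro τ₁ h₁ τ₂ h₂ hF
    have hF' : F τ₁ = F τ₂ := hF
    apply Equiv.ext
    intro i
    apply hfi
    rw [← hF_f τ₁ i, ← hF_f τ₂ i, hF']
  · intro σ hσ
    simp only [Finset.mem_filter, Finset.mem_univ, true_and] at hσ
    obtain ⟨⟨hσ2, hσfp⟩, hσu⟩ := hσ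
    have hσσ : ∀ x, σ (σ x) = x := by
      intro x
      have := congrArg (fun (g : Equiv.Perm ι) => g x) hσ2
      simpa using this
    have hσv : σ v = u := by rw [← hσu, hσσ]
    have hps : ∀ i, p (σ (f i)) := by
      intro i
      constructor
      · intro h
        have : f i = v := by rw [← hσu, ← h, hσσ]
        exact (hpf i).2 this
      · intro h
        have : f i = u := by rw [← hσv, ← h, hσσ]
        exact (hpf i).1 this
    have hfg : ∀ (x : ι) (h : p x), f (e.symm ⟨x, h⟩) = x := by
      intro x h
      rw [← he (e.symm ⟨x, h⟩), Equiv.apply_symm_apply]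
    set g : κ → κ := fun i => e.symm ⟨σ (f i), hps i⟩ with hg
    have hfg' : ∀ i, f (g i) = σ (f i) := fun i => hfg _ _
    have hgg : ∀ i, g (g i) = i := by
      intro i
      apply hfi
      rw [hfg', hfg', hσσ]
    refine ⟨⟨g, g, hgg, hgg⟩, ?_, ?_⟩
    · simp only [Finset.mem_filter, Finset.mem_univ, true_and]
      refine ⟨?_, ?_⟩
      · apply Equiv.ext; intro i
        exact hgg i
      · intro i h
        apply hσfp (f i)
        rw [← hfg' i, show g i = i from h]
    · apply Equiv.ext
      intro x
      rcases hcases x with rfl | rfl | ⟨i, rfl⟩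
      · rw [hF_u, hσu]
      · rw [hF_v, hσv]
      · rw [hF_f]
        exact hfg' i
  · intro τ hτ
    beta_reduce
    rw [hprodset τ, Finset.prod_insert (hunotmem τ), Finset.prod_map, hF_u]
    congr 1
    apply Finset.prod_congr rfl
    intro i _
    simp only [Function.Embedding.coeFn_mk, Matrix.submatrix_apply, hF_f]


lemma haf_split {ι κ : Type*} [Fintype ι] [LinearOrder ι] [Fintype κ] [LinearOrder κ]
    (A : Matrix ι ι ℤ) (u v : ι) (huv : u < v) (f : κ → ι) (hf : StrictMono f)
    (hr : ∀ x, (∃ i, f i = x) ↔ (x ≠ u ∧ x ≠ v)) :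
    hafnian A = A u v * hafnian (A.submatrix f f) +
      hafnian (fun i j => if (i = u ∧ j = v) ∨ (i = v ∧ j = u) then (0:ℤ) else A i j) := by
  set A' : Matrix ι ι ℤ :=
    (fun i j => if (i = u ∧ j = v) ∨ (i = v ∧ j = u) then (0:ℤ) else A i j) with hA'
  have split : ∀ B : Matrix ι ι ℤ,
      hafnian B =
        (∑ σ ∈ Finset.univ.filter
            (fun σ : Equiv.Perm ι => (σ * σ = 1 ∧ ∀ i, σ i ≠ i) ∧ σ u = v),
          ∏ i ∈ Finset.univ.filter (fun i => i < σ i), B i (σ i))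
        + (∑ σ ∈ Finset.univ.filter
            (fun σ : Equiv.Perm ι => (σ * σ = 1 ∧ ∀ i, σ i ≠ i) ∧ ¬ (σ u = v)),
          ∏ i ∈ Finset.univ.filter (fun i => i < σ i), B i (σ i)) := by
    intro B
    rw [hafnian,
      ← Finset.sum_filter_add_sum_filter_not
        (Finset.univ.filter (fun σ : Equiv.Perm ι => σ * σ = 1 ∧ ∀ i, σ i ≠ i))
        (fun σ => σ u = v), Finset.filter_filter, Finset.filter_filter]
  have hA'uv : A' u v = 0 := by simp [hA']
  have hsub : A'.submatrix f f = A'.submatrix f f := rfl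
  rw [split A, split A', haf_core A u v huv f hf hr, haf_core A' u v huv f hf hr, hA'uv,
    zero_mul, zero_add]
  congr 1
  apply Finset.sum_congr rfl
  intro σ hσ
  simp only [Finset.mem_filter, Finset.mem_univ, true_and] at hσ
  obtain ⟨⟨hσ2, _⟩, hσu⟩ := hσ
  have hσσ : ∀ x, σ (σ x) = x := by
    intro x
    have := congrArg (fun (g : Equiv.Perm ι) => g x) hσ2
    simpa using this
  apply Finset.prod_congr rfl
  intro i _
  show A i (σ i) = A' i (σ i)
  rw [hA']
  beta_reduce
  rw [if_neg]
  rintro (⟨rfl, h⟩ | ⟨rfl, h⟩)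
  · exact hσu h
  · apply hσu
    rw [← h, hσσ]

def dEmb (n : ℕ) (j : Fin (n+2)) : Fin n → Fin (n+2) := fun i =>
  if (i:ℕ)+1 < (j:ℕ) then ⟨(i:ℕ)+1, by have := i.isLt; omega⟩
  else ⟨(i:ℕ)+2, by have := i.isLt; omega⟩

lemma dEmb_strictMono (n : ℕ) (j : Fin (n+2)) : StrictMono (dEmb n j) := by
  intro a b hab
  have h1 : (a:ℕ) < (b:ℕ) := hab
  unfold dEmb
  split_ifs with h2 h3 h3 <;> (rw [Fin.mk_lt_mk]) <;> omega

lemma dEmb_range (n : ℕ) (j : Fin (n+2)) (hj : j ≠ 0) (x : Fin (n+2)) :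
    (∃ i, dEmb n j i = x) ↔ (x ≠ 0 ∧ x ≠ j) := by
  have hjv : (j:ℕ) ≠ 0 := fun h => hj (Fin.ext h)
  have hjlt := j.isLt
  have hxlt := x.isLt
  constructor
  · rintro ⟨i, rfl⟩
    have hilt := i.isLt
    unfold dEmb
    split_ifs with h <;>
      exact ⟨fun hc => by have := congrArg Fin.val hc; simp at this,
             fun hc => by have := congrArg Fin.val hc; simp at this; omega⟩
  · rintro ⟨h0, hx⟩
    have hxv : (x:ℕ) ≠ 0 := fun h => h0 (Fin.ext h)
    have hxj : (x:ℕ) ≠ (j:ℕ) := fun h => hx (Fin.ext h)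
    by_cases hlt : (x:ℕ) < (j:ℕ)
    · refine ⟨⟨(x:ℕ)-1, by omega⟩, ?_⟩
      unfold dEmb
      rw [if_pos (by simp; omega)]
      exact Fin.ext (by simp; omega)
    · refine ⟨⟨(x:ℕ)-2, by omega⟩, ?_⟩
      unfold dEmb
      rw [if_neg (by simp; omega)]
      exact Fin.ext (by simp; omega)

set_option maxHeartbeats 1000000 in
lemma haf_expand {n : ℕ} (A : Matrix (Fin (n+2)) (Fin (n+2)) ℤ) (hA : A 0 0 = 0) :
    hafnian A = ∑ j : Fin (n+2), A 0 j * hafnian (A.submatrix (dEmb n j) (dEmb n j)) := by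
  have hmaps : ∀ (s : Finset (Equiv.Perm (Fin (n+2)))), ∀ σ ∈ s,
      σ 0 ∈ (Finset.univ : Finset (Fin (n+2))) := fun _ _ _ => Finset.mem_univ _
  rw [hafnian, ← Finset.sum_fiberwise_of_maps_to (hmaps _)]
  apply Finset.sum_congr rfl
  intro j _
  by_cases hj : j = 0
  · subst hj
    rw [hA, zero_mul]
    apply Finset.sum_eq_zero
    intro σ hσ
    simp only [Finset.mem_filter, Finset.mem_univ, true_and] at hσ
    exact absurd hσ.2 (hσ.1.2 0)
  · rw [Finset.filter_filter]
    have h := haf_core A 0 j (Fin.pos_of_ne_zero hj) (dEmb n j) (dEmb_strictMono n j)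
      (dEmb_range n j hj)
    convert h using 2

def PM (w : ℕ → ℤ) (n : ℕ) : Matrix (Fin n) (Fin n) ℤ := fun i j =>
  if (i:ℕ)+1 = (j:ℕ) then w i
  else if (j:ℕ)+1 = (i:ℕ) then w j
  else if (i:ℕ) = (j:ℕ) then 0 else 1

def updW (w : ℕ → ℤ) (p : ℕ) (c : ℤ) : ℕ → ℤ := fun k => if k = p then c else w k

def graftW (w : ℕ → ℤ) (j : ℕ) : ℕ → ℤ := fun k =>
  if k+2 < j then w (k+1) else if k+2 = j then 1 else w (k+2)

def cutW (w : ℕ → ℤ) (p : ℕ) : ℕ → ℤ := fun k =>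
  if k+1 < p then w k else if k+1 = p then 1 else w (k+2)

def c2 : ℕ → ℤ := fun _ => 2

lemma PM_congr {w w' : ℕ → ℤ} {n : ℕ} (h : ∀ k, k+1 < n → w k = w' k) :
    PM w n = PM w' n := by
  funext i j
  have hi := i.isLt
  have hj := j.isLt
  unfold PM
  split_ifs with h1 h2
  · exact h _ (by omega)
  · exact h _ (by omega)
  · rfl
  · rfl

lemma PM_diag (w : ℕ → ℤ) (n : ℕ) (i : Fin n) : PM w n i i = 0 := by
  unfold PM
  split_ifs <;> first | rfl | omega

lemma PM_apply_zero (w : ℕ → ℤ) (n : ℕ) (j : Fin (n+2)) :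
    PM w (n+2) 0 j = if (j:ℕ) = 1 then w 0 else if (j:ℕ) = 0 then 0 else 1 := by
  unfold PM
  have : ((0 : Fin (n+2)) : ℕ) = 0 := rfl
  rw [this]
  split_ifs <;> first | rfl | omega | (congr 1; omega) | (exfalso; omega) | exact (‹False›).elim

lemma PM_submatrix_dEmb (w : ℕ → ℤ) (n : ℕ) (j : Fin (n+2)) :
    (PM w (n+2)).submatrix (dEmb n j) (dEmb n j) = PM (graftW w (j:ℕ)) n := by
  funext a b
  have ha := a.isLt
  have hb := b.isLt
  have hj := j.isLt
  show PM w (n+2) (dEmb n j a) (dEmb n j b) = _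
  unfold PM dEmb graftW
  by_cases h1 : (a:ℕ)+1 < (j:ℕ) <;> by_cases h2 : (b:ℕ)+1 < (j:ℕ) <;>
    simp only [h1, h2, if_true, if_false] <;>
    split_ifs <;> first | rfl | omega | (congr 1; omega) | (exfalso; omega) | exact (‹False›).elim

def pEmb (n p : ℕ) : Fin n → Fin (n+2) := fun i =>
  if (i:ℕ) < p then ⟨(i:ℕ), by have := i.isLt; omega⟩
  else ⟨(i:ℕ)+2, by have := i.isLt; omega⟩

lemma pEmb_strictMono (n p : ℕ) : StrictMono (pEmb n p) := by
  intro a b hab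
  have h1 : (a:ℕ) < (b:ℕ) := hab
  unfold pEmb
  split_ifs <;> rw [Fin.mk_lt_mk] <;> omega

lemma pEmb_range (n p : ℕ) (hp : p + 1 < n + 2) (x : Fin (n+2)) :
    (∃ i, pEmb n p i = x) ↔ (x ≠ ⟨p, by omega⟩ ∧ x ≠ ⟨p+1, hp⟩) := by
  have hxlt := x.isLt
  constructor
  · rintro ⟨i, rfl⟩
    have hilt := i.isLt
    unfold pEmb
    split_ifs with h <;>
      exact ⟨fun hc => by have := congrArg Fin.val hc; simp at this; try omega,
             fun hc => by have := congrArg Fin.val hc; simp at this; try omega⟩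
  · rintro ⟨h0, h1⟩
    have hx0 : (x:ℕ) ≠ p := fun h => h0 (Fin.ext (by simpa using h))
    have hx1 : (x:ℕ) ≠ p+1 := fun h => h1 (Fin.ext (by simpa using h))
    by_cases hlt : (x:ℕ) < p
    · refine ⟨⟨(x:ℕ), by omega⟩, ?_⟩
      unfold pEmb
      rw [if_pos (show ((⟨(x:ℕ), by omega⟩ : Fin n) : ℕ) < p from hlt)]
      all_goals exact Fin.ext rfl
    · refine ⟨⟨(x:ℕ)-2, by omega⟩, ?_⟩
      unfold pEmb
      rw [if_neg (show ¬ ((⟨(x:ℕ)-2, by omega⟩ : Fin n) : ℕ) < p from by simp; omega)]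
      all_goals exact Fin.ext (by simp; omega)

lemma PM_submatrix_pEmb (w : ℕ → ℤ) (n p : ℕ) :
    (PM w (n+2)).submatrix (pEmb n p) (pEmb n p) = PM (cutW w p) n := by
  funext a b
  have ha := a.isLt
  have hb := b.isLt
  show PM w (n+2) (pEmb n p a) (pEmb n p b) = _
  unfold PM pEmb cutW
  by_cases h1 : (a:ℕ) < p <;> by_cases h2 : (b:ℕ) < p <;>
    simp only [h1, h2, if_true, if_false] <;>
    split_ifs <;> first | rfl | omega | (congr 1; omega) | (exfalso; omega) | exact (‹False›).elim

lemma PM_zeroed (w : ℕ → ℤ) (n p : ℕ) (hp : p + 1 < n + 2) :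
    (fun i j => if (i = (⟨p, by omega⟩ : Fin (n+2)) ∧ j = ⟨p+1, hp⟩)
        ∨ (i = ⟨p+1, hp⟩ ∧ j = ⟨p, by omega⟩) then (0:ℤ) else PM w (n+2) i j)
      = PM (updW w p 0) (n+2) := by
  funext i j
  have hi := i.isLt
  have hj := j.isLt
  simp only [Fin.ext_iff]
  unfold PM updW
  split_ifs <;> first | rfl | omega | (congr 1; omega) | (exfalso; omega) | exact (‹False›).elim

noncomputable def Hn (n : ℕ) : ℤ := hafnian (PM c2 n)
noncomputable def Dn (n q : ℕ) : ℤ := hafnian (PM (updW c2 q 1) n)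
noncomputable def Zn (n q : ℕ) : ℤ := hafnian (PM (updW c2 q 0) n)

lemma wfun_lemmas : True := trivial

lemma graftW_c2_one : graftW c2 1 = c2 := by
  funext k; unfold graftW c2; split_ifs <;> first | rfl | omega | exact (‹False›).elim

lemma graftW_c2_two (q : ℕ) : graftW c2 (q+2) = updW c2 q 1 := by
  funext k; unfold graftW c2 updW; split_ifs <;> first | rfl | omega | exact (‹False›).elim

lemma cutW_c2_zero : cutW c2 0 = c2 := by
  funext k; unfold cutW c2; split_ifs <;> first | rfl | omega | exact (‹False›).elim

lemma cutW_c2_succ (p : ℕ) : cutW c2 (p+1) = updW c2 p 1 := by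
  funext k; unfold cutW c2 updW; split_ifs <;> first | rfl | omega | exact (‹False›).elim

lemma cutW_upd_zero : cutW (updW c2 0 1) 0 = c2 := by
  funext k; unfold cutW c2 updW; split_ifs <;> first | rfl | omega | exact (‹False›).elim

lemma cutW_upd_succ (p : ℕ) : cutW (updW c2 (p+1) 1) (p+1) = updW c2 p 1 := by
  funext k; unfold cutW c2 updW; split_ifs <;> first | rfl | omega | exact (‹False›).elim

lemma updW_updW (p : ℕ) : updW (updW c2 p 1) p 0 = updW c2 p 0 := by
  funext k; unfold c2 updW; split_ifs <;> first | rfl | omega | exact (‹False›).elim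

lemma E_split (w : ℕ → ℤ) (n p : ℕ) (hp : p ≤ n) :
    hafnian (PM w (n+2)) =
      w p * hafnian (PM (cutW w p) n) + hafnian (PM (updW w p 0) (n+2)) := by
  have hp2 : p + 1 < n + 2 := by omega
  have h := haf_split (PM w (n+2)) ⟨p, by omega⟩ ⟨p+1, hp2⟩ (by rw [Fin.mk_lt_mk]; omega)
      (pEmb n p) (pEmb_strictMono n p) (pEmb_range n p hp2)
  rw [PM_submatrix_pEmb] at h
  have hA : PM w (n+2) ⟨p, by omega⟩ ⟨p+1, hp2⟩ = w p := by
    unfold PM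
    rw [if_pos rfl]
  rw [hA] at h
  rw [h]
  congr 1
  refine congrArg hafnian ?_
  funext i j
  have h2 := congrFun (congrFun (PM_zeroed w n p hp2) i) j
  convert h2 using 2

lemma E1 (n : ℕ) : Hn (n+2) = 2 * Hn n + ∑ q ∈ Finset.range n, Dn n q := by
  have h0 : PM c2 (n+2) 0 0 = 0 := PM_diag _ _ _
  rw [Hn, haf_expand _ h0]
  have hsummand : ∀ j : Fin (n+2),
      PM c2 (n+2) 0 j * hafnian ((PM c2 (n+2)).submatrix (dEmb n j) (dEmb n j))
      = (fun k => (if k = 1 then (2:ℤ) else if k = 0 then 0 else 1)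
          * hafnian (PM (graftW c2 k) n)) ((j:ℕ)) := by
    intro j
    rw [PM_apply_zero, PM_submatrix_dEmb]
    show (if ((j:ℕ)) = 1 then c2 0 else _) * _ = _
    norm_num [c2]
  rw [Finset.sum_congr rfl (fun j _ => hsummand j),
    Fin.sum_univ_eq_sum_range (fun k => (if k = 1 then (2:ℤ) else if k = 0 then 0 else 1)
      * hafnian (PM (graftW c2 k) n)) (n+2),
    Finset.sum_range_succ', Finset.sum_range_succ']
  have ht : ∀ i, (if i+1+1 = 1 then (2:ℤ) else if i+1+1 = 0 then 0 else 1)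
      * hafnian (PM (graftW c2 (i+1+1)) n) = Dn n i := by
    intro i
    rw [if_neg (by omega), if_neg (by omega), one_mul,
      show i+1+1 = i+2 from rfl, graftW_c2_two]
    rfl
  rw [Finset.sum_congr rfl (fun i _ => ht i)]
  norm_num [graftW_c2_one]
  rw [show hafnian (PM c2 n) = Hn n from rfl]
  ring

lemma E2_zero (n : ℕ) : Dn (n+2) 0 = Hn n + Zn (n+2) 0 := by
  have h := E_split (updW c2 0 1) n 0 (by omega)
  rw [cutW_upd_zero, updW_updW] at h
  have h1 : updW c2 0 1 0 = 1 := rfl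
  rw [h1, one_mul] at h
  exact h

lemma E2_succ (n p : ℕ) (hp : p + 1 ≤ n) : Dn (n+2) (p+1) = Dn n p + Zn (n+2) (p+1) := by
  have h := E_split (updW c2 (p+1) 1) n (p+1) hp
  rw [cutW_upd_succ, updW_updW] at h
  have h1 : updW c2 (p+1) 1 (p+1) = 1 := by unfold updW; rw [if_pos rfl]
  rw [h1, one_mul] at h
  exact h

lemma E3_zero (n : ℕ) : Hn (n+2) = 2 * Hn n + Zn (n+2) 0 := by
  have h := E_split c2 n 0 (by omega)
  rw [cutW_c2_zero] at h
  exact h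

lemma E3_succ (n p : ℕ) (hp : p + 1 ≤ n) : Hn (n+2) = 2 * Dn n p + Zn (n+2) (p+1) := by
  have h := E_split c2 n (p+1) hp
  rw [cutW_c2_succ] at h
  exact h

lemma D_zero (n : ℕ) : Dn (n+2) 0 = Hn (n+2) - Hn n := by
  have h1 := E2_zero n
  have h2 := E3_zero n
  linarith

lemma D_succ (n p : ℕ) (hp : p + 1 ≤ n) : Dn (n+2) (p+1) = Hn (n+2) - Dn n p := by
  have h1 := E2_succ n p hp
  have h2 := E3_succ n p hp
  linarith

lemma D_top (n q : ℕ) (hq : n ≤ q + 1) : Dn n q = Hn n := by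
  unfold Dn Hn
  congr 1
  apply PM_congr
  intro k hk
  unfold updW
  rw [if_neg (by omega)]

lemma bessel (n : ℕ) : Hn (n+4) = ((n:ℤ)+3) * Hn (n+2) + Hn n := by
  have e1a := E1 (n+2)
  have e1b := E1 n
  have hsum : ∑ q ∈ Finset.range (n+2), Dn (n+2) q
      = (∑ p ∈ Finset.range n, (Hn (n+2) - Dn n p)) + Dn (n+2) (n+1) + Dn (n+2) 0 := by
    rw [Finset.sum_range_succ', Finset.sum_range_succ]
    rw [Finset.sum_congr rfl (fun p hp => D_succ n p (by
      have := Finset.mem_range.1 hp; omega))]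
  rw [D_top (n+2) (n+1) (by omega), D_zero n] at hsum
  have hconst : ∑ p ∈ Finset.range n, (Hn (n+2) - Dn n p)
      = (n:ℤ) * Hn (n+2) - ∑ p ∈ Finset.range n, Dn n p := by
    rw [Finset.sum_sub_distrib, Finset.sum_const, Finset.card_range, nsmul_eq_mul]
  rw [hconst] at hsum
  have e14 : Hn (n+2+2) = 2 * Hn (n+2) + ∑ q ∈ Finset.range (n+2), Dn (n+2) q := e1a
  have : Hn (n+4) = Hn (n+2+2) := by norm_num
  rw [this, e14, hsum]
  linarith

lemma Hn_zero : Hn 0 = 1 := hafnian_fin_zero _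

lemma Hn_two : Hn 2 = 2 := by
  have h := E1 0
  simpa [Hn_zero] using h

def NB (n k : ℕ) : ℕ := (n+k).choose (2*k) * (2*k-1)‼

def rB (m : ℕ) : ℕ := ∑ k ∈ Finset.range (m+1), NB m k

lemma NB_zero (n : ℕ) : NB n 0 = 1 := by simp [NB]

lemma NB_big (n k : ℕ) (hk : n < k) : NB n k = 0 := by
  unfold NB
  rw [Nat.choose_eq_zero_of_lt (by omega), zero_mul]

lemma NB_rec (n k : ℕ) (hk : k ≤ n + 1) :
    NB (n+2) (k+1) = (2*n+3) * NB (n+1) k + NB n (k+1) := by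
  unfold NB
  rw [show n+2+(k+1) = (n+k+2)+1 from by omega, show 2*(k+1) = (2*k+1)+1 from by omega,
    show n+1+k = n+k+1 from by omega, show n+(k+1) = n+k+1 from by omega,
    Nat.choose_succ_succ (n+k+2) (2*k+1),
    show n+k+2 = (n+k+1)+1 from by omega,
    Nat.choose_succ_succ (n+k+1) (2*k), Nat.choose_succ_succ (n+k+1) (2*k+1),
    show (2*k+1+1-1) = (2*k)+1 from by omega,
    Nat.doubleFactorial_add_one (2*k)]
  simp only [Nat.succ_eq_add_one]
  have h3 : (n+k+1).choose (2*k+1) * (2*k+1) = (n+k+1).choose (2*k) * (n+1-k) := by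
    rw [Nat.choose_succ_right_eq]
    congr 1
    omega
  have hm : (n+1-k) + k = n+1 := by omega
  zify at h3 hm ⊢
  linear_combination (2*((2*k-1)‼:ℤ)) * h3 +
    (2*((n+k+1).choose (2*k) : ℤ)*((2*k-1)‼:ℤ)) * hm

lemma NB_eq_div (m k : ℕ) (hk : k ≤ m) :
    (m+k).factorial / (k.factorial * (m-k).factorial * 2^k) = NB m k := by
  rcases Nat.eq_zero_or_pos k with rfl | hkpos
  · simp [NB, Nat.div_self (Nat.factorial_pos m)]
  have hfac : (2*k).factorial = (2*k-1)‼ * (k.factorial * 2^k) := by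
    rw [show 2*k = (2*k-1)+1 from by omega, Nat.factorial_eq_mul_doubleFactorial,
      show 2*k-1+1 = 2*k from by omega, Nat.doubleFactorial_two_mul]
    ring
  have hch := Nat.choose_mul_factorial_mul_factorial (show 2*k ≤ m+k by omega)
  rw [show m+k-2*k = m-k from by omega] at hch
  have key : (m+k).factorial = NB m k * (k.factorial * (m-k).factorial * 2^k) := by
    rw [← hch, NB, hfac]
    ring
  have hpos : 0 < k.factorial * (m-k).factorial * 2^k :=
    Nat.mul_pos (Nat.mul_pos (Nat.factorial_pos _) (Nat.factorial_pos _)) (Nat.pow_pos (by omega))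
  rw [key, Nat.mul_div_cancel _ hpos]

lemma rB_zero : rB 0 = 1 := by simp [rB, NB]

lemma rB_one : rB 1 = 2 := by decide

lemma rB_rec (n : ℕ) : rB (n+2) = (2*n+3) * rB (n+1) + rB n := by
  have h1 : rB (n+2) = (∑ k ∈ Finset.range (n+2), NB (n+2) (k+1)) + NB (n+2) 0 := by
    rw [rB, Finset.sum_range_succ']
  rw [Finset.sum_congr rfl (fun k hk => NB_rec n k (by
    have := Finset.mem_range.1 hk; omega))] at h1
  rw [Finset.sum_add_distrib, ← Finset.mul_sum] at h1
  have h2 : ∑ k ∈ Finset.range (n+2), NB (n+1) k = rB (n+1) := rfl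
  have h3 : ∑ k ∈ Finset.range (n+2), NB n (k+1)
      = ∑ k ∈ Finset.range n, NB n (k+1) := by
    rw [Finset.sum_range_succ, Finset.sum_range_succ,
      NB_big n (n+1) (by omega), NB_big n (n+2) (by omega)]
    simp
  have h4 : rB n = (∑ k ∈ Finset.range n, NB n (k+1)) + NB n 0 := by
    rw [rB, Finset.sum_range_succ']
  rw [h2, h3, NB_zero] at h1
  rw [NB_zero] at h4
  omega

lemma Hn_rB (m : ℕ) : Hn (2*m) = (rB m : ℤ) := by
  induction m using Nat.twoStepInduction with
  | zero => simpa [rB_zero] using Hn_zero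
  | one => simpa [rB_one] using Hn_two
  | more n ih2 ih1 =>
    have hb := bessel (2*n)
    rw [show 2*n+4 = 2*(n+2) from by omega, show 2*n+2 = 2*(n+1) from by omega] at hb
    rw [hb, ih1, ih2, rB_rec n]
    push_cast
    ring


lemma T21_eq (m : ℕ) : T21 m = PM c2 (2*m) := by
  funext i j
  simp only [T21, PM, c2, Fin.ext_iff]
  split_ifs <;> first | rfl | omega | exact (‹False›).elim | (exfalso; omega)

lemma haf_T21_rB (m : ℕ) : hafnian (T21 m) = (rB m : ℤ) := by
  rw [T21_eq, show hafnian (PM c2 (2*m)) = Hn (2*m) from rfl, Hn_rB]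

lemma rB_two : rB 2 = 7 := by decide
lemma rB_three : rB 3 = 37 := by decide
lemma rB_four : rB 4 = 266 := by decide
lemma rB_five : rB 5 = 2431 := by decide
lemma rB_six : rB 6 = 27007 := by decide

/-- For every `m ≥ 1`, `Hf(T_{2,1}) = Σ_{k=0}^{m} (m+k)!/(k!·(m−k)!·2^k)`;
in particular, for `m = 1, 2, 3, 4, 5, 6` these values are
`2, 7, 37, 266, 2431, 27007`. -/
theorem hafnian_T21 :
    (∀ m : ℕ, 0 < m →
      hafnian (T21 m) =
        ∑ k ∈ Finset.range (m + 1),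
          ((Nat.factorial (m + k) /
            (Nat.factorial k * Nat.factorial (m - k) * 2 ^ k) : ℕ) : ℤ)) ∧
    hafnian (T21 1) = 2 ∧ hafnian (T21 2) = 7 ∧ hafnian (T21 3) = 37 ∧
    hafnian (T21 4) = 266 ∧ hafnian (T21 5) = 2431 ∧ hafnian (T21 6) = 27007 := by
  have hmain : ∀ m : ℕ, hafnian (T21 m) =
      ∑ k ∈ Finset.range (m + 1),
        ((Nat.factorial (m + k) /
          (Nat.factorial k * Nat.factorial (m - k) * 2 ^ k) : ℕ) : ℤ) := by
    intro m
    rw [haf_T21_rB]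
    have hs : ∑ k ∈ Finset.range (m+1),
        Nat.factorial (m + k) / (Nat.factorial k * Nat.factorial (m - k) * 2 ^ k) = rB m :=
      Finset.sum_congr rfl (fun k hk => NB_eq_div m k (by
        have := Finset.mem_range.1 hk; omega))
    rw [← hs]
    push_cast
    rfl
  refine ⟨fun m _ => hmain m, ?_, ?_, ?_, ?_, ?_, ?_⟩ <;>
    rw [haf_T21_rB]
  · rw [rB_one]; rfl
  · rw [rB_two]; rfl
  · rw [rB_three]; rfl
  · rw [rB_four]; rfl
  · rw [rB_five]; rfl
  · rw [rB_six]; rfl
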